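/- For each $k \in \{1,2,3\}$ and $l=4$, the determinant of the matrix $\eta^{ij} = \partial g_{(4)}^{ij}/\partial y^k$ is a nonzero constant multiple of $(y^4)^{4-k}$; in particular $\eta$ is nondegenerate exactly on the locus $y^4 \ne 0$ when $k < 4$, and everywhere when $k=4$. -/

import Mathlib

/-- The explicit `B_4` orbit-space metric `g_{(4)}` in the coordinates `y^1, …, y^4`
(`y i` stands for `y^{i+1}`). -/
noncomputable def g4 (y : Fin 4 → ℝ) : Matrix (Fin 4) (Fin 4) ℝ :=
  !![4*y 0,  8*y 1,              12*y 2,                    16*y 3;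
     8*y 1,  4*y 0*y 1+12*y 2,   8*y 0*y 2+16*y 3,          12*y 0*y 3;
     12*y 2, 8*y 0*y 2+16*y 3,   4*y 1*y 2+12*y 0*y 3,      8*y 1*y 3;
     16*y 3, 12*y 0*y 3,         8*y 1*y 3,                 4*y 2*y 3]

/-- `η^{ij} = ∂g_{(4)}^{ij}/∂y^{k+1}` (entrywise partial derivative, `k : Fin 4`). -/
noncomputable def eta4k (k : Fin 4) (y : Fin 4 → ℝ) : Matrix (Fin 4) (Fin 4) ℝ :=
  fun i j => fderiv ℝ (fun z : Fin 4 → ℝ => g4 z i j) y (Pi.single k 1)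

lemma hproj (i : Fin 4) (y : Fin 4 → ℝ) :
    HasFDerivAt (fun z : Fin 4 → ℝ => z i)
      (ContinuousLinearMap.proj i : (Fin 4 → ℝ) →L[ℝ] ℝ) y :=
  (ContinuousLinearMap.proj i : (Fin 4 → ℝ) →L[ℝ] ℝ).hasFDerivAt

lemma pdA (c : ℝ) (i k : Fin 4) (y : Fin 4 → ℝ) :
    fderiv ℝ (fun z : Fin 4 → ℝ => c * z i) y (Pi.single k 1)
      = if i = k then c else 0 := by
  rw [((hproj i y).const_mul c).fderiv]
  simp [Pi.single_apply]

lemma pdB (c : ℝ) (i j k : Fin 4) (y : Fin 4 → ℝ) :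
    fderiv ℝ (fun z : Fin 4 → ℝ => c * z i * z j) y (Pi.single k 1)
      = c * ((if i = k then y j else 0) + (if j = k then y i else 0)) := by
  rw [HasFDerivAt.fderiv (f := fun z : Fin 4 → ℝ => c * z i * z j) (((hproj i y).const_mul c).mul (hproj j y))]
  simp [Pi.single_apply]
  split <;> split <;> ring

lemma pdC (c d : ℝ) (i j l k : Fin 4) (y : Fin 4 → ℝ) :
    fderiv ℝ (fun z : Fin 4 → ℝ => c * z i * z j + d * z l) y (Pi.single k 1)
      = c * ((if i = k then y j else 0) + (if j = k then y i else 0))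
        + (if l = k then d else 0) := by
  rw [HasFDerivAt.fderiv (f := fun z : Fin 4 → ℝ => c * z i * z j + d * z l) ((((hproj i y).const_mul c).mul (hproj j y)).add ((hproj l y).const_mul d))]
  simp [Pi.single_apply]
  split <;> split <;> ring

lemma pdD (c d : ℝ) (i j l m k : Fin 4) (y : Fin 4 → ℝ) :
    fderiv ℝ (fun z : Fin 4 → ℝ => c * z i * z j + d * z l * z m) y (Pi.single k 1)
      = c * ((if i = k then y j else 0) + (if j = k then y i else 0))
        + d * ((if l = k then y m else 0) + (if m = k then y l else 0)) := by
  rw [HasFDerivAt.fderiv (f := fun z : Fin 4 → ℝ => c * z i * z j + d * z l * z m) ((((hproj i y).const_mul c).mul (hproj j y)).add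
      (((hproj l y).const_mul d).mul (hproj m y)))]
  simp [Pi.single_apply]
  split <;> split <;> split <;> split <;> ring

lemma eta0 (y : Fin 4 → ℝ) :
    eta4k 0 y = !![4,0,0,0; 0,4*y 1,8*y 2,12*y 3; 0,8*y 2,12*y 3,0; 0,12*y 3,0,0] := by
  ext i j
  fin_cases i <;> fin_cases j <;> simp [eta4k, g4] <;>
    first
      | (rw [pdD]; simp (config := { decide := true }) [Matrix.vecHead, Matrix.vecTail])
      | (rw [pdC]; simp (config := { decide := true }) [Matrix.vecHead, Matrix.vecTail])
      | (rw [pdB]; simp (config := { decide := true }) [Matrix.vecHead, Matrix.vecTail])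
      | (rw [pdA]; simp (config := { decide := true }) [Matrix.vecHead, Matrix.vecTail])

lemma eta1 (y : Fin 4 → ℝ) :
    eta4k 1 y = !![0,8,0,0; 8,4*y 0,0,0; 0,0,4*y 2,8*y 3; 0,0,8*y 3,0] := by
  ext i j
  fin_cases i <;> fin_cases j <;> simp [eta4k, g4] <;>
    first
      | (rw [pdD]; simp (config := { decide := true }) [Matrix.vecHead, Matrix.vecTail])
      | (rw [pdC]; simp (config := { decide := true }) [Matrix.vecHead, Matrix.vecTail])
      | (rw [pdB]; simp (config := { decide := true }) [Matrix.vecHead, Matrix.vecTail])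
      | (rw [pdA]; simp (config := { decide := true }) [Matrix.vecHead, Matrix.vecTail])

lemma eta2 (y : Fin 4 → ℝ) :
    eta4k 2 y = !![0,0,12,0; 0,12,8*y 0,0; 12,8*y 0,4*y 1,0; 0,0,0,4*y 3] := by
  ext i j
  fin_cases i <;> fin_cases j <;> simp [eta4k, g4] <;>
    first
      | (rw [pdD]; simp (config := { decide := true }) [Matrix.vecHead, Matrix.vecTail])
      | (rw [pdC]; simp (config := { decide := true }) [Matrix.vecHead, Matrix.vecTail])
      | (rw [pdB]; simp (config := { decide := true }) [Matrix.vecHead, Matrix.vecTail])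
      | (rw [pdA]; simp (config := { decide := true }) [Matrix.vecHead, Matrix.vecTail])

lemma eta3 (y : Fin 4 → ℝ) :
    eta4k 3 y = !![0,0,0,16; 0,0,16,12*y 0; 0,16,12*y 0,8*y 1; 16,12*y 0,8*y 1,4*y 2] := by
  ext i j
  fin_cases i <;> fin_cases j <;> simp [eta4k, g4] <;>
    first
      | (rw [pdD]; simp (config := { decide := true }) [Matrix.vecHead, Matrix.vecTail])
      | (rw [pdC]; simp (config := { decide := true }) [Matrix.vecHead, Matrix.vecTail])
      | (rw [pdB]; simp (config := { decide := true }) [Matrix.vecHead, Matrix.vecTail])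
      | (rw [pdA]; simp (config := { decide := true }) [Matrix.vecHead, Matrix.vecTail])

lemma det0 (y : Fin 4 → ℝ) : (eta4k 0 y).det = -6912 * y 3 ^ 3 := by
  rw [eta0]; simp [Matrix.det_succ_row_zero, Fin.sum_univ_succ]; ring

lemma det1 (y : Fin 4 → ℝ) : (eta4k 1 y).det = 4096 * y 3 ^ 2 := by
  rw [eta1]; simp [Matrix.det_succ_row_zero, Fin.sum_univ_succ]; simp [Fin.succAbove]; ring

lemma det2 (y : Fin 4 → ℝ) : (eta4k 2 y).det = -6912 * y 3 ^ 1 := by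
  rw [eta2]; simp [Matrix.det_succ_row_zero, Fin.sum_univ_succ]; simp [Fin.succAbove]; ring

lemma det3 (y : Fin 4 → ℝ) : (eta4k 3 y).det = 65536 := by
  rw [eta3]; simp [Matrix.det_succ_row_zero, Fin.sum_univ_succ]; simp [Fin.succAbove]; norm_num

/-- For `k ∈ {1,2,3}` (i.e. `(k : Fin 4).val < 3`), `det η` is a nonzero constant multiple
of `(y^4)^{4-k}`; in particular `η` is nondegenerate exactly on `y^4 ≠ 0`.  For `k = 4`
(`k = 3 : Fin 4`), `det η` is a nonzero constant, so `η` is nondegenerate everywhere. -/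
theorem stmt17 :
    (∀ k : Fin 4, (k : ℕ) < 3 →
      ∃ c : ℝ, c ≠ 0 ∧ ∀ y : Fin 4 → ℝ,
        (eta4k k y).det = c * (y 3) ^ (3 - (k : ℕ))) ∧
    (∀ k : Fin 4, (k : ℕ) < 3 →
      ∀ y : Fin 4 → ℝ, ((eta4k k y).det ≠ 0 ↔ y 3 ≠ 0)) ∧
    (∃ c : ℝ, c ≠ 0 ∧ ∀ y : Fin 4 → ℝ, (eta4k 3 y).det = c) := by
  refine ⟨?_, ?_, ⟨65536, by norm_num, det3⟩⟩
  · intro k hk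
    fin_cases k
    · exact ⟨-6912, by norm_num, det0⟩
    · exact ⟨4096, by norm_num, det1⟩
    · exact ⟨-6912, by norm_num, det2⟩
    · simp at hk
  · intro k hk y
    fin_cases k
    · show (eta4k 0 y).det ≠ 0 ↔ y 3 ≠ 0
      rw [det0]; simp [pow_eq_zero_iff]
    · show (eta4k 1 y).det ≠ 0 ↔ y 3 ≠ 0
      rw [det1]; simp [pow_eq_zero_iff]
    · show (eta4k 2 y).det ≠ 0 ↔ y 3 ≠ 0
      rw [det2]; simp [pow_eq_zero_iff]
    · simp at hk
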